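/- Let n ≥ 1 and J be natural numbers, let A be a real number with A ≥ 1/n, and let Ω = Fin J → Fin (n+1) be the space of parameter configurations, where a coordinate value i represents the real parameter i/n ∈ [0,1]. Let K be a row-stochastic matrix on Ω such that for every configuration P : Ω, every coordinate j : Fin J, and every value v : Fin (n+1) with |(v : ℝ)/n − (P j : ℝ)/n| ≤ A, the one-step transition probability K P (Function.update P j v) is strictly positive. Then there exists a natural number N such that for all configurations P, P' : Ω, the N-step transition probability (K^N) P P' is strictly positive; in particular the Markov chain with transition matrix K is both irreducible and aperiodic. -/
import Mathlib

private lemma pow_entry_nonneg' {ι : Type*} [Fintype ι] [DecidableEq ι]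
    (K : Matrix ι ι ℝ) (h : ∀ s t, 0 ≤ K s t) :
    ∀ m s t, 0 ≤ (K ^ m) s t := by
  intro m
  induction m with
  | zero =>
    intro s t
    rw [pow_zero, Matrix.one_apply]
    split <;> norm_num
  | succ m ih =>
    intro s t
    rw [pow_succ, Matrix.mul_apply]
    exact Finset.sum_nonneg fun u _ => mul_nonneg (ih s u) (h u t)

/-- **Irreducibility and aperiodicity of the correction process** (paper's combined
theorems): on the configuration space `Ω = Fin J → Fin (n+1)` of `J` parameters
taking values in the grid `{0, 1/n, …, 1}`, if every single-coordinate change of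
amplitude at most `A ≥ 1/n` (including the trivial change) has positive one-step
probability, then some power of `K` has all entries positive; in particular the
chain is irreducible and aperiodic (every state has period `1`). -/
theorem correction_process_irreducible_aperiodic
    (n : ℕ) (hn : 1 ≤ n) (J : ℕ) (A : ℝ) (hA : 1 / (n : ℝ) ≤ A)
    (K : Matrix (Fin J → Fin (n + 1)) (Fin J → Fin (n + 1)) ℝ)
    (hK_nonneg : ∀ s t, 0 ≤ K s t)
    (hK_rowsum : ∀ s, ∑ t, K s t = 1)
    (hK_pos : ∀ (P : Fin J → Fin (n + 1)) (j : Fin J) (v : Fin (n + 1)),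
      |((v : ℕ) : ℝ) / n - ((P j : ℕ) : ℝ) / n| ≤ A →
      0 < K P (Function.update P j v)) :
    (∃ N : ℕ, ∀ P P' : Fin J → Fin (n + 1), 0 < (K ^ N) P P') ∧
    (∀ P P' : Fin J → Fin (n + 1), ∃ k : ℕ, 0 < (K ^ k) P P') ∧
    (∀ P : Fin J → Fin (n + 1), ∀ d : ℕ,
      (∀ k : ℕ, k ∈ {k : ℕ | 1 ≤ k ∧ 0 < (K ^ k) P P} → d ∣ k) → d = 1) := by
  have hn' : (0 : ℝ) < n := by exact_mod_cast hn
  have hnonneg := pow_entry_nonneg' K hK_nonneg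
  -- any single step of grid-size at most 1 is positive
  have hstep : ∀ (P : Fin J → Fin (n + 1)) (j : Fin J) (v : Fin (n + 1)),
      Nat.dist (v : ℕ) (P j : ℕ) ≤ 1 → 0 < K P (Function.update P j v) := by
    intro P j v hd
    apply hK_pos
    have hb : (v : ℕ) ≤ (P j : ℕ) + 1 ∧ (P j : ℕ) ≤ (v : ℕ) + 1 := by
      simp only [Nat.dist] at hd; omega
    have h1 : |((v : ℕ) : ℝ) - ((P j : ℕ) : ℝ)| ≤ 1 := by
      rw [abs_le]
      constructor
      · have := hb.2
        have : ((P j : ℕ) : ℝ) ≤ ((v : ℕ) : ℝ) + 1 := by exact_mod_cast this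
        linarith
      · have := hb.1
        have : ((v : ℕ) : ℝ) ≤ ((P j : ℕ) : ℝ) + 1 := by exact_mod_cast this
        linarith
    calc |((v : ℕ) : ℝ) / n - ((P j : ℕ) : ℝ) / n|
        = |((v : ℕ) : ℝ) - ((P j : ℕ) : ℝ)| / n := by
          rw [div_sub_div_same, abs_div, abs_of_pos hn']
      _ ≤ 1 / n := by gcongr
      _ ≤ A := hA
  -- diagonal entries are positive
  have hdiag : ∀ P, 0 < K P P := by
    rcases Nat.eq_zero_or_pos J with hJ | hJ
    · subst hJ
      intro P
      have h := hK_rowsum P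
      rw [show (Finset.univ : Finset (Fin 0 → Fin (n + 1))) = {P} from by
          ext t
          simp only [Finset.mem_univ, Finset.mem_singleton, true_iff]
          exact Subsingleton.elim t P, Finset.sum_singleton] at h
      rw [h]
      norm_num
    · intro P
      have := hstep P ⟨0, hJ⟩ (P ⟨0, hJ⟩) (by simp [Nat.dist])
      rwa [Function.update_eq_self] at this
  -- main induction: enough steps to cover the ℓ¹ grid distance
  have hpow : ∀ m (P P' : Fin J → Fin (n + 1)),
      (∑ j, Nat.dist (P j : ℕ) (P' j : ℕ)) ≤ m → 0 < (K ^ m) P P' := by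
    intro m
    induction m with
    | zero =>
      intro P P' h
      have hPP : P = P' := by
        funext j
        have hz := (Finset.sum_eq_zero_iff.mp (Nat.le_zero.mp h)) j (Finset.mem_univ j)
        exact Fin.val_injective (Nat.eq_of_dist_eq_zero hz)
      subst hPP
      rw [pow_zero, Matrix.one_apply_eq]
      norm_num
    | succ m ih =>
      intro P P' h
      rw [pow_succ', Matrix.mul_apply]
      by_cases hPP : P = P'
      · subst hPP
        refine Finset.sum_pos' (fun t _ => mul_nonneg (hK_nonneg P t) (hnonneg m t P))
          ⟨P, Finset.mem_univ P, mul_pos (hdiag P) (ih P P (by simp))⟩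
      · obtain ⟨j, hj⟩ : ∃ j, P j ≠ P' j := by
          by_contra hc; push_neg at hc; exact hPP (funext hc)
        have hjv : (P j : ℕ) ≠ (P' j : ℕ) := fun hc => hj (Fin.val_injective hc)
        have hbn : (P' j : ℕ) < n + 1 := (P' j).isLt
        have han : (P j : ℕ) < n + 1 := (P j).isLt
        -- choose v one step from `P j` towards `P' j`
        obtain ⟨v, hv1, hv2⟩ : ∃ v : Fin (n + 1),
            Nat.dist (v : ℕ) (P j : ℕ) ≤ 1 ∧
              Nat.dist (v : ℕ) (P' j : ℕ) + 1 = Nat.dist (P j : ℕ) (P' j : ℕ) := by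
          rcases Nat.lt_or_ge (P j : ℕ) (P' j : ℕ) with hab | hab
          · exact ⟨⟨(P j : ℕ) + 1, by omega⟩, by simp [Nat.dist], by simp [Nat.dist]; omega⟩
          · have hab' : (P' j : ℕ) < (P j : ℕ) := lt_of_le_of_ne hab (Ne.symm hjv)
            exact ⟨⟨(P j : ℕ) - 1, by omega⟩, by simp [Nat.dist]; omega,
              by simp [Nat.dist]; omega⟩
        have hP1 : Function.update P j v = Function.update P j v := rfl
        generalize hQ : Function.update P j v = P1 at *
        have hsum : (∑ i, Nat.dist (P1 i : ℕ) (P' i : ℕ)) ≤ m := by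
          have e1 : (∑ i, Nat.dist (P1 i : ℕ) (P' i : ℕ))
              = Nat.dist (P1 j : ℕ) (P' j : ℕ)
                + ∑ i ∈ Finset.univ.erase j, Nat.dist (P1 i : ℕ) (P' i : ℕ) :=
            (Finset.add_sum_erase _ _ (Finset.mem_univ j)).symm
          have e2 : (∑ i, Nat.dist (P i : ℕ) (P' i : ℕ))
              = Nat.dist (P j : ℕ) (P' j : ℕ)
                + ∑ i ∈ Finset.univ.erase j, Nat.dist (P i : ℕ) (P' i : ℕ) :=
            (Finset.add_sum_erase _ _ (Finset.mem_univ j)).symm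
          have e3 : ∑ i ∈ Finset.univ.erase j, Nat.dist (P1 i : ℕ) (P' i : ℕ)
              = ∑ i ∈ Finset.univ.erase j, Nat.dist (P i : ℕ) (P' i : ℕ) := by
            refine Finset.sum_congr rfl fun i hi => ?_
            rw [← hQ, Function.update_of_ne (Finset.ne_of_mem_erase hi)]
          have e4 : (P1 j : ℕ) = (v : ℕ) := by rw [← hQ, Function.update_self]
          rw [e1, e3, e4]
          rw [e2] at h
          omega
        refine Finset.sum_pos' (fun t _ => mul_nonneg (hK_nonneg P t) (hnonneg m t P'))
          ⟨P1, Finset.mem_univ P1, mul_pos (hQ ▸ hstep P j v hv1) (ih P1 P' hsum)⟩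
  have hbound : ∀ P P' : Fin J → Fin (n + 1),
      (∑ j, Nat.dist (P j : ℕ) (P' j : ℕ)) ≤ J * n := by
    intro P P'
    calc (∑ j, Nat.dist (P j : ℕ) (P' j : ℕ)) ≤ ∑ _j : Fin J, n := by
          refine Finset.sum_le_sum fun j _ => ?_
          have h1 := (P j).isLt
          have h2 := (P' j).isLt
          simp only [Nat.dist]; omega
      _ = J * n := by simp [Finset.sum_const, mul_comm]
  have hall : ∀ m, J * n ≤ m → ∀ P P' : Fin J → Fin (n + 1), 0 < (K ^ m) P P' :=
    fun m hm P P' => hpow m P P' (le_trans (hbound P P') hm)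
  refine ⟨⟨J * n, hall _ le_rfl⟩, fun P P' => ⟨J * n, hall _ le_rfl P P'⟩, ?_⟩
  intro P d hd
  have h1 := hd (J * n + 1) ⟨by omega, hall _ (by omega) P P⟩
  have h2 := hd (J * n + 2) ⟨by omega, hall _ (by omega) P P⟩
  have : d ∣ 1 := by
    have := Nat.dvd_sub h2 h1
    simpa using this
  exact Nat.dvd_one.mp this
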